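/- Let n ≥ 3 and m ≥ 1 be integers, k > 0, r > 0 with r ≠ 1, and set a := (n−2)k − m and b := m(2k+1) − (n−2)k². Assume r(k+a)² ≥ (r−1)(a²−b), let N := (r(k+a) ± √(r²(k+a)² − r(r−1)(a²−b)))/(r(r−1)) (either choice of sign), and assume a − rN ≠ 0. Let c ∈ ℝ and c₁, c₂, c₃ > 0, and on the half-line I := {ξ ∈ ℝ : (a−rN)ξ + c > 0} define f(ξ) := c₁((a−rN)ξ+c)^{−1/(a−rN)}, h(ξ) := c₂((a−rN)ξ+c)^{−N/(a−rN)}, and φ(ξ) := c₃((a−rN)ξ+c)^{−k/(a−rN)}. Then on I the following three equations hold: (n−2)fhφ'' − rfφh'' − mhφf'' − 2mhφ'f' − 2rfφ'h' = 0; fhφφ'' − (n−1)fh(φ')² + mhφφ'f' + rfφφ'h' = 0; and −fhφ²f'' + (n−2)fhφφ'f' − (m−1)hφ²(f')² − rfφ²f'h' = 0. -/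

import Mathlib

private lemma auxD (A c C p : ℝ) (ξ : ℝ) (hx : 0 < A * ξ + c) :
    HasDerivAt (fun x => C * (A * x + c) ^ p) (C * p * A * (A * ξ + c) ^ (p - 1)) ξ := by
  have h1 : HasDerivAt (fun x : ℝ => A * x + c) A ξ := by
    simpa using ((hasDerivAt_id ξ).const_mul A).add_const c
  have h2 := (h1.rpow_const (p := p) (Or.inl hx.ne')).const_mul C
  rw [show C * p * A * (A * ξ + c) ^ (p - 1) = C * (A * p * (A * ξ + c) ^ (p - 1)) by ring]
  exact h2

private lemma auxDD (A c C p : ℝ) (f : ℝ → ℝ)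
    (hf : ∀ x, f x = C * (A * x + c) ^ p) (ξ : ℝ) (hx : 0 < A * ξ + c) :
    deriv f ξ = C * p * A * (A * ξ + c) ^ (p - 1) ∧
      deriv (deriv f) ξ = C * p * A * (p - 1) * A * (A * ξ + c) ^ (p - 2) := by
  have hfe : f = fun x => C * (A * x + c) ^ p := funext hf
  have hopen : IsOpen {x : ℝ | 0 < A * x + c} :=
    isOpen_lt continuous_const (by continuity)
  have hd1 : ∀ x, 0 < A * x + c → deriv f x = C * p * A * (A * x + c) ^ (p - 1) := by
    intro x hx'
    rw [hfe]
    exact (auxD A c C p x hx').deriv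
  refine ⟨hd1 ξ hx, ?_⟩
  have hev : deriv f =ᶠ[nhds ξ] fun x => (C * p * A) * (A * x + c) ^ (p - 1) := by
    filter_upwards [hopen.mem_nhds hx] with x hx'
    exact hd1 x hx'
  rw [hev.deriv_eq]
  have := (auxD A c (C * p * A) (p - 1) ξ hx).deriv
  rw [this]
  ring_nf

/-- For `r ≠ 1` and `N` a root of the quadratic (either sign of the
square root), the explicit power-law functions `f, h, φ` solve the three
translation-invariant quasi-Einstein equations (ρ = 0, Ricci-flat fiber) on the
half-line where `(a−rN)ξ + c > 0`. -/
theorem stmt6 (n m : ℕ) (hn : 3 ≤ n) (hm : 1 ≤ m) (k r : ℝ) (hk : 0 < k) (hr : 0 < r)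
    (hr1 : r ≠ 1)
    (a b : ℝ) (ha : a = (n - 2 : ℝ) * k - m) (hb : b = m * (2 * k + 1) - (n - 2 : ℝ) * k ^ 2)
    (hdisc : (r - 1) * (a ^ 2 - b) ≤ r * (k + a) ^ 2)
    (s : ℝ) (hs : s = 1 ∨ s = -1)
    (N : ℝ) (hN : N = (r * (k + a)
        + s * Real.sqrt (r ^ 2 * (k + a) ^ 2 - r * (r - 1) * (a ^ 2 - b))) / (r * (r - 1)))
    (hane : a - r * N ≠ 0)
    (c c₁ c₂ c₃ : ℝ) (hc₁ : 0 < c₁) (hc₂ : 0 < c₂) (hc₃ : 0 < c₃)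
    (f h φ : ℝ → ℝ)
    (hf : ∀ ξ, f ξ = c₁ * ((a - r * N) * ξ + c) ^ (-(1 / (a - r * N))))
    (hh : ∀ ξ, h ξ = c₂ * ((a - r * N) * ξ + c) ^ (-(N / (a - r * N))))
    (hφ : ∀ ξ, φ ξ = c₃ * ((a - r * N) * ξ + c) ^ (-(k / (a - r * N)))) :
    ∀ ξ : ℝ, 0 < (a - r * N) * ξ + c →
      ((n - 2 : ℝ) * f ξ * h ξ * deriv (deriv φ) ξ - r * f ξ * φ ξ * deriv (deriv h) ξ
        - m * h ξ * φ ξ * deriv (deriv f) ξ - 2 * m * h ξ * deriv φ ξ * deriv f ξ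
        - 2 * r * f ξ * deriv φ ξ * deriv h ξ = 0) ∧
      (f ξ * h ξ * φ ξ * deriv (deriv φ) ξ - (n - 1 : ℝ) * f ξ * h ξ * (deriv φ ξ) ^ 2
        + m * h ξ * φ ξ * deriv φ ξ * deriv f ξ + r * f ξ * φ ξ * deriv φ ξ * deriv h ξ = 0) ∧
      (-(f ξ) * h ξ * (φ ξ) ^ 2 * deriv (deriv f) ξ
        + (n - 2 : ℝ) * f ξ * h ξ * φ ξ * deriv φ ξ * deriv f ξ
        - (m - 1 : ℝ) * h ξ * (φ ξ) ^ 2 * (deriv f ξ) ^ 2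
        - r * f ξ * (φ ξ) ^ 2 * deriv f ξ * deriv h ξ = 0) := by
  -- the quadratic relation satisfied by N
  have hD0 : 0 ≤ r ^ 2 * (k + a) ^ 2 - r * (r - 1) * (a ^ 2 - b) := by
    nlinarith [mul_nonneg hr.le (sub_nonneg.2 hdisc)]
  have hsq : (Real.sqrt (r ^ 2 * (k + a) ^ 2 - r * (r - 1) * (a ^ 2 - b))) ^ 2
      = r ^ 2 * (k + a) ^ 2 - r * (r - 1) * (a ^ 2 - b) := Real.sq_sqrt hD0
  have hrr1 : r - 1 ≠ 0 := sub_ne_zero.2 hr1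
  have hrr : r * (r - 1) ≠ 0 := mul_ne_zero hr.ne' hrr1
  have hN2 : r * (r - 1) * N = r * (k + a)
      + s * Real.sqrt (r ^ 2 * (k + a) ^ 2 - r * (r - 1) * (a ^ 2 - b)) := by
    rw [hN]; field_simp
  have hs2 : s ^ 2 = 1 := by rcases hs with h' | h' <;> simp [h']
  have h3 : r * (r - 1) * (r * (r - 1) * N ^ 2 - 2 * r * (k + a) * N + (a ^ 2 - b)) = 0 := by
    linear_combination (r * (r - 1) * N - r * (k + a)
        + s * Real.sqrt (r ^ 2 * (k + a) ^ 2 - r * (r - 1) * (a ^ 2 - b))) * hN2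
      + (Real.sqrt (r ^ 2 * (k + a) ^ 2 - r * (r - 1) * (a ^ 2 - b))) ^ 2 * hs2 + hsq
  have hquad : r * (r - 1) * N ^ 2 - 2 * r * (k + a) * N + (a ^ 2 - b) = 0 :=
    (mul_eq_zero.mp h3).resolve_left hrr
  set A := a - r * N with hA
  -- key scalar identities
  have hK1 : ((n : ℝ) - 2) * k * (k + A) - r * N * (N + A) - (m : ℝ) * (1 + A)
      - 2 * (m : ℝ) * k - 2 * r * k * N = 0 := by
    linear_combination hquad + hb - (a - r * N) * ha + (((n : ℝ) - 2) * k - r * N - (m : ℝ)) * hA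
  have hK2 : k * (k + A) - ((n : ℝ) - 1) * k ^ 2 + (m : ℝ) * k + r * k * N = 0 := by
    linear_combination k * ha + k * hA
  have hK3 : -(1 + A) + ((n : ℝ) - 2) * k - ((m : ℝ) - 1) - r * N = 0 := by
    linear_combination (-1 : ℝ) * ha + (-1 : ℝ) * hA
  intro ξ hu
  obtain ⟨f1, f2⟩ := auxDD A c c₁ (-(1 / A)) f hf ξ hu
  obtain ⟨h1, h2⟩ := auxDD A c c₂ (-(N / A)) h hh ξ hu
  obtain ⟨p1, p2⟩ := auxDD A c c₃ (-(k / A)) φ hφ ξ hu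
  have cf1 : c₁ * (-(1 / A)) * A = -c₁ := by field_simp
  have cf2 : c₁ * (-(1 / A)) * A * (-(1 / A) - 1) * A = c₁ * (1 + A) := by
    field_simp; ring
  have ch1 : c₂ * (-(N / A)) * A = -(c₂ * N) := by field_simp
  have ch2 : c₂ * (-(N / A)) * A * (-(N / A) - 1) * A = c₂ * N * (N + A) := by
    field_simp; ring
  have cp1 : c₃ * (-(k / A)) * A = -(c₃ * k) := by field_simp
  have cp2 : c₃ * (-(k / A)) * A * (-(k / A) - 1) * A = c₃ * k * (k + A) := by
    field_simp; ring
  rw [cf1] at f1; rw [cf2] at f2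
  rw [ch1] at h1; rw [ch2] at h2
  rw [cp1] at p1; rw [cp2] at p2
  set u := A * ξ + c with hudef
  have hm2 : ∀ p q : ℝ, u ^ p * u ^ q = u ^ (p + q) := fun p q => (Real.rpow_add hu p q).symm
  set α : ℝ := -(1 / A) with hα
  set β : ℝ := -(N / A) with hβ
  set γ : ℝ := -(k / A) with hγ
  refine ⟨?_, ?_, ?_⟩
  · -- equation 1
    have P1 : u ^ α * u ^ β * u ^ (γ - 2) = u ^ (α + β + γ - 2) := by
      rw [hm2, hm2]; congr 1; ring
    have P2 : u ^ α * u ^ γ * u ^ (β - 2) = u ^ (α + β + γ - 2) := by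
      rw [hm2, hm2]; congr 1; ring
    have P3 : u ^ β * u ^ γ * u ^ (α - 2) = u ^ (α + β + γ - 2) := by
      rw [hm2, hm2]; congr 1; ring
    have P4 : u ^ β * u ^ (γ - 1) * u ^ (α - 1) = u ^ (α + β + γ - 2) := by
      rw [hm2, hm2]; congr 1; ring
    have P5 : u ^ α * u ^ (γ - 1) * u ^ (β - 1) = u ^ (α + β + γ - 2) := by
      rw [hm2, hm2]; congr 1; ring
    rw [hf ξ, hh ξ, hφ ξ, f1, f2, h1, h2, p1, p2]
    linear_combination (((n : ℝ) - 2) * c₁ * c₂ * c₃ * k * (k + A)) * P1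
      + (-(r * c₁ * c₂ * c₃ * N * (N + A))) * P2
      + (-((m : ℝ) * c₁ * c₂ * c₃ * (1 + A))) * P3
      + (-(2 * (m : ℝ) * c₁ * c₂ * c₃ * k)) * P4
      + (-(2 * r * c₁ * c₂ * c₃ * k * N)) * P5
      + (c₁ * c₂ * c₃ * u ^ (α + β + γ - 2)) * hK1
  · -- equation 2
    have P1 : u ^ α * u ^ β * u ^ γ * u ^ (γ - 2) = u ^ (α + β + γ + γ - 2) := by
      rw [hm2, hm2, hm2]; congr 1; ring
    have P2 : u ^ α * u ^ β * (u ^ (γ - 1) * u ^ (γ - 1)) = u ^ (α + β + γ + γ - 2) := by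
      rw [hm2, hm2, hm2]; congr 1; ring
    have P3 : u ^ β * u ^ γ * u ^ (γ - 1) * u ^ (α - 1) = u ^ (α + β + γ + γ - 2) := by
      rw [hm2, hm2, hm2]; congr 1; ring
    have P4 : u ^ α * u ^ γ * u ^ (γ - 1) * u ^ (β - 1) = u ^ (α + β + γ + γ - 2) := by
      rw [hm2, hm2, hm2]; congr 1; ring
    rw [hf ξ, hh ξ, hφ ξ, f1, h1, p1, p2]
    linear_combination (c₁ * c₂ * c₃ * c₃ * k * (k + A)) * P1
      + (-(((n : ℝ) - 1) * c₁ * c₂ * c₃ * c₃ * k * k)) * P2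
      + ((m : ℝ) * c₁ * c₂ * c₃ * c₃ * k) * P3
      + (r * c₁ * c₂ * c₃ * c₃ * k * N) * P4
      + (c₁ * c₂ * c₃ * c₃ * u ^ (α + β + γ + γ - 2)) * hK2
  · -- equation 3
    have P1 : u ^ α * u ^ β * (u ^ γ * u ^ γ) * u ^ (α - 2)
        = u ^ (α + α + β + γ + γ - 2) := by
      rw [hm2, hm2, hm2, hm2]; congr 1; ring
    have P2 : u ^ α * u ^ β * u ^ γ * u ^ (γ - 1) * u ^ (α - 1)
        = u ^ (α + α + β + γ + γ - 2) := by
      rw [hm2, hm2, hm2, hm2]; congr 1; ring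
    have P3 : u ^ β * (u ^ γ * u ^ γ) * (u ^ (α - 1) * u ^ (α - 1))
        = u ^ (α + α + β + γ + γ - 2) := by
      rw [hm2, hm2, hm2, hm2]; congr 1; ring
    have P4 : u ^ α * (u ^ γ * u ^ γ) * u ^ (α - 1) * u ^ (β - 1)
        = u ^ (α + α + β + γ + γ - 2) := by
      rw [hm2, hm2, hm2, hm2]; congr 1; ring
    rw [hf ξ, hh ξ, hφ ξ, f1, f2, h1, p1]
    linear_combination (-(c₁ * c₁ * c₂ * c₃ * c₃ * (1 + A))) * P1
      + (((n : ℝ) - 2) * c₁ * c₁ * c₂ * c₃ * c₃ * k) * P2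
      + (-(((m : ℝ) - 1) * c₁ * c₁ * c₂ * c₃ * c₃)) * P3
      + (-(r * c₁ * c₁ * c₂ * c₃ * c₃ * N)) * P4
      + (c₁ * c₁ * c₂ * c₃ * c₃ * u ^ (α + α + β + γ + γ - 2)) * hK3
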